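/- Every tree-child binary phylogenetic network is an orchard network, and if (i,j) is a reducible pair of a tree-child network N, then the reduction N^{(i,j)} is again tree-child. -/

import Mathlib

/-- A directed graph with node set `V ⊆ ℕ` and arc set `A`.  Leaves are
identified with their taxon labels (natural numbers). -/
structure Net where
  V : Finset ℕ
  A : Finset (ℕ × ℕ)

namespace Net

def indeg (N : Net) (v : ℕ) : ℕ := (N.A.filter (fun a => a.2 = v)).card
def outdeg (N : Net) (v : ℕ) : ℕ := (N.A.filter (fun a => a.1 = v)).card

def isLeaf (N : Net) (v : ℕ) : Prop := v ∈ N.V ∧ N.indeg v = 1 ∧ N.outdeg v = 0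
def isRoot (N : Net) (v : ℕ) : Prop := v ∈ N.V ∧ N.indeg v = 0 ∧ N.outdeg v = 1
def isTreeNode (N : Net) (v : ℕ) : Prop := v ∈ N.V ∧ N.indeg v = 1 ∧ N.outdeg v = 2
def isRetic (N : Net) (v : ℕ) : Prop := v ∈ N.V ∧ N.indeg v = 2 ∧ N.outdeg v = 1

/-- The set of leaves (= taxa) of a network. -/
def leaves (N : Net) : Finset ℕ := N.V.filter (fun v => N.indeg v = 1 ∧ N.outdeg v = 0)

/-- Number of reticulation nodes. -/
def numRetic (N : Net) : ℕ := (N.V.filter (fun v => N.indeg v = 2 ∧ N.outdeg v = 1)).card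

/-- `N` is a rooted binary phylogenetic network: arcs join nodes, it is acyclic,
has a unique root, and every node is a root, leaf, tree node or reticulation. -/
def isPhylo (N : Net) : Prop :=
  (∀ a ∈ N.A, a.1 ∈ N.V ∧ a.2 ∈ N.V) ∧
  (∀ v, ¬ Relation.TransGen (fun u w => (u, w) ∈ N.A) v v) ∧
  (∃! r, N.isRoot r) ∧
  (∀ v ∈ N.V, N.isRoot v ∨ N.isLeaf v ∨ N.isTreeNode v ∨ N.isRetic v)

/-- `(i,j)` is a cherry: `i ≠ j` are leaves with a common parent. -/
def isCherry (N : Net) (i j : ℕ) : Prop :=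
  i ≠ j ∧ N.isLeaf i ∧ N.isLeaf j ∧ ∃ p, (p, i) ∈ N.A ∧ (p, j) ∈ N.A

/-- `(i,j)` is a reticulated cherry: the parent of `i` is a reticulation,
the parent of `j` is a tree node and a parent of the parent of `i`. -/
def isRetCherry (N : Net) (i j : ℕ) : Prop :=
  i ≠ j ∧ N.isLeaf i ∧ N.isLeaf j ∧
    ∃ pi pj, (pi, i) ∈ N.A ∧ (pj, j) ∈ N.A ∧
      N.isRetic pi ∧ N.isTreeNode pj ∧ (pj, pi) ∈ N.A

/-- `(i,j)` is a reducible pair. -/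
def Reducible (N : Net) (s : ℕ × ℕ) : Prop := N.isCherry s.1 s.2 ∨ N.isRetCherry s.1 s.2

end Net

/-- The reduction of a cherry `(i,j)`: delete leaf `i` and simplify the
(now elementary) common parent `p`, whose parent is `g`. -/
def CherryReduce (N : Net) (i j : ℕ) (N' : Net) : Prop :=
  ∃ p g, (p, i) ∈ N.A ∧ (p, j) ∈ N.A ∧ (g, p) ∈ N.A ∧
    N'.V = (N.V.erase i).erase p ∧
    N'.A = (N.A \ {(p, i), (p, j), (g, p)}) ∪ {(g, j)}

/-- The reduction of a reticulated cherry `(i,j)`: delete the arc from the parent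
`pj` of `j` to the parent `pi` of `i`, and simplify the two elementary nodes. -/
def RetCherryReduce (N : Net) (i j : ℕ) (N' : Net) : Prop :=
  ∃ pi pj q g, (pi, i) ∈ N.A ∧ (pj, j) ∈ N.A ∧ (pj, pi) ∈ N.A ∧
    (q, pi) ∈ N.A ∧ q ≠ pj ∧ (g, pj) ∈ N.A ∧
    N'.V = (N.V.erase pi).erase pj ∧
    N'.A = (N.A \ {(pj, pi), (q, pi), (pi, i), (g, pj), (pj, j)}) ∪ {(q, i), (g, j)}

/-- `N'` is the reduction `N^{(i,j)}` of the reducible pair `s = (i,j)` in `N`. -/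
def Reduces (N : Net) (s : ℕ × ℕ) (N' : Net) : Prop :=
  (N.isCherry s.1 s.2 ∧ CherryReduce N s.1 s.2 N') ∨
  (N.isRetCherry s.1 s.2 ∧ RetCherryReduce N s.1 s.2 N')

/-- `N'` is the result of reducing in `N` the pairs of the sequence `S`, from left to right. -/
inductive ReducesSeq : Net → List (ℕ × ℕ) → Net → Prop
  | nil (N : Net) : ReducesSeq N [] N
  | cons {N M N' : Net} {s : ℕ × ℕ} {S : List (ℕ × ℕ)} :
      Reduces N s M → ReducesSeq M S N' → ReducesSeq N (s :: S) N'

/-- `N` is the trivial network `I l` (a root and the leaf `l`). -/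
def isTrivial (N : Net) (l : ℕ) : Prop :=
  ∃ r, r ≠ l ∧ N.V = {r, l} ∧ N.A = {(r, l)}

/-- `S` is a complete reducible sequence for `N`. -/
def CompleteRS (N : Net) (S : List (ℕ × ℕ)) : Prop :=
  ∃ N' l, ReducesSeq N S N' ∧ isTrivial N' l

/-- `N` is an orchard network. -/
def Net.isOrchard (N : Net) : Prop := N.isPhylo ∧ ∃ S, CompleteRS N S

/-- Isomorphism of networks: an arc-preserving and arc-reflecting bijection
of the nodes which is the identity on the leaves. -/
def NetIso (N N' : Net) : Prop :=
  ∃ φ : ℕ → ℕ, Set.BijOn φ ↑N.V ↑N'.V ∧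
    (∀ u ∈ N.V, ∀ v ∈ N.V, ((u, v) ∈ N.A ↔ (φ u, φ v) ∈ N'.A)) ∧
    ∀ l ∈ N.leaves, φ l = l

/-- Augmentation of `(i,j)` when `i` is a new taxon: create a new leaf `i`,
subdivide the arc `(q,j)` into `j` with a new node `p`, and add the arc `(p,i)`. -/
def CherryAug (N : Net) (i j : ℕ) (N' : Net) : Prop :=
  ∃ q p, (q, j) ∈ N.A ∧ i ∉ N.V ∧ p ∉ N.V ∧ p ≠ i ∧
    N'.V = insert i (insert p N.V) ∧
    N'.A = (N.A.erase (q, j)) ∪ {(q, p), (p, j), (p, i)}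

/-- Augmentation of `(i,j)` when `i` is already a leaf: subdivide the arcs into
`i` and `j` with new nodes `pi`, `pj` and add the arc `(pj, pi)`. -/
def RetAug (N : Net) (i j : ℕ) (N' : Net) : Prop :=
  ∃ qi qj pi pj, (qi, i) ∈ N.A ∧ (qj, j) ∈ N.A ∧
    pi ∉ N.V ∧ pj ∉ N.V ∧ pi ≠ pj ∧
    N'.V = insert pi (insert pj N.V) ∧
    N'.A = ((N.A.erase (qi, i)).erase (qj, j)) ∪
      {(qi, pi), (pi, i), (qj, pj), (pj, j), (pj, pi)}

/-- `N'` is the augmentation `^{(i,j)}N` of the pair `s = (i,j)` in `N`. -/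
def Augments (N : Net) (s : ℕ × ℕ) (N' : Net) : Prop :=
  s.1 ≠ s.2 ∧ N.isLeaf s.2 ∧
    ((s.1 ∉ N.leaves ∧ CherryAug N s.1 s.2 N') ∨
     (s.1 ∈ N.leaves ∧ RetAug N s.1 s.2 N'))

/-- The total order on pairs: `(i,j) ≤ (i',j')` iff `i < i'` or (`i = i'` and `j ≤ j'`). -/
def pairLE (p q : ℕ × ℕ) : Prop := p.1 < q.1 ∨ (p.1 = q.1 ∧ p.2 ≤ q.2)

/-- Strict version of `pairLE`. -/
def pairLT (p q : ℕ × ℕ) : Prop := p.1 < q.1 ∨ (p.1 = q.1 ∧ p.2 < q.2)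

/-- Lexicographic order on sequences of pairs (of the same length). -/
def seqLE : List (ℕ × ℕ) → List (ℕ × ℕ) → Prop
  | [], [] => True
  | p :: S, q :: S' => pairLT p q ∨ (p = q ∧ seqLE S S')
  | _, _ => False

/-- `s` is the minimum reducible pair of `N`. -/
def isMRP (N : Net) (s : ℕ × ℕ) : Prop :=
  N.Reducible s ∧ ∀ t, N.Reducible t → pairLE s t

/-- `S` is the minimum complete reducible sequence of `N`. -/
def isMCRS (N : Net) (S : List (ℕ × ℕ)) : Prop :=
  CompleteRS N S ∧ ∀ S', CompleteRS N S' → seqLE S S'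

/-- `N` is (isomorphic to) the network `^S I` generated by applying the
augmentations of `S`, from right to left, to a trivial network. -/
inductive Generates : List (ℕ × ℕ) → Net → Prop
  | triv {N : Net} {l : ℕ} : isTrivial N l → Generates [] N
  | cons {s : ℕ × ℕ} {S : List (ℕ × ℕ)} {N N' : Net} :
      Generates S N → Augments N s N' → Generates (s :: S) N'

/-- `S` is a minimum augmentation sequence: `S = MCRS(^S I)`. -/
def isMinAugSeq (S : List (ℕ × ℕ)) : Prop :=
  ∃ N, Generates S N ∧ isMCRS N S

/-- `N` is tree-child: every internal node has a child that is not a reticulation. -/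
def Net.isTreeChild (N : Net) : Prop :=
  ∀ v ∈ N.V, ¬ N.isLeaf v → ∃ c, (v, c) ∈ N.A ∧ ¬ N.isRetic c

/-- The possible states of a taxon in a network. -/
inductive LState | sN | sP | sS | sT
deriving DecidableEq

open Classical in
/-- The state `σ_N(i)` of a taxon `i`: `sN` if `i` is not a leaf of `N`; otherwise
`sP` if its parent is a reticulation; otherwise `sS` if its sibling is a
reticulation; otherwise `sT`. -/
noncomputable def state (N : Net) (i : ℕ) : LState :=
  if ¬ N.isLeaf i then .sN
  else if ∃ p, (p, i) ∈ N.A ∧ N.isRetic p then .sP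
  else if ∃ p s, (p, i) ∈ N.A ∧ (p, s) ∈ N.A ∧ s ≠ i ∧ N.isRetic s then .sS
  else .sT
section Helpers

open Finset

lemma finset_eq_pair {α : Type*} [DecidableEq α] {s : Finset α} {a b : α}
    (h : s.card = 2) (ha : a ∈ s) (hb : b ∈ s) (hab : a ≠ b) : s = {a, b} := by
  symm
  apply Finset.eq_of_subset_of_card_le
  · intro x hx
    rcases Finset.mem_insert.1 hx with rfl | hx
    · exact ha
    · rwa [Finset.mem_singleton.1 hx]
  · rw [h, Finset.card_pair hab]

namespace Net

variable {N : Net} {u v w : ℕ}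

def step (N : Net) : ℕ → ℕ → Prop := fun u w => (u, w) ∈ N.A

lemma indeg_pos (h : (u, v) ∈ N.A) : 1 ≤ N.indeg v :=
  Finset.card_pos.2 ⟨(u, v), Finset.mem_filter.2 ⟨h, rfl⟩⟩

lemma outdeg_pos (h : (u, v) ∈ N.A) : 1 ≤ N.outdeg u :=
  Finset.card_pos.2 ⟨(u, v), Finset.mem_filter.2 ⟨h, rfl⟩⟩

lemma in_arcs_eq (h1 : N.indeg v = 1) (h : (u, v) ∈ N.A) :
    N.A.filter (fun a => a.2 = v) = {(u, v)} := by
  obtain ⟨a, ha⟩ := Finset.card_eq_one.1 h1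
  have hm : (u, v) ∈ N.A.filter (fun a => a.2 = v) := Finset.mem_filter.2 ⟨h, rfl⟩
  rw [ha] at hm ⊢
  rw [Finset.mem_singleton] at hm
  rw [hm]

lemma out_arcs_eq (h1 : N.outdeg u = 1) (h : (u, v) ∈ N.A) :
    N.A.filter (fun a => a.1 = u) = {(u, v)} := by
  obtain ⟨a, ha⟩ := Finset.card_eq_one.1 h1
  have hm : (u, v) ∈ N.A.filter (fun a => a.1 = u) := Finset.mem_filter.2 ⟨h, rfl⟩
  rw [ha] at hm ⊢
  rw [Finset.mem_singleton] at hm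
  rw [hm]

lemma parent_unique (h1 : N.indeg v = 1) (h : (u, v) ∈ N.A) (h' : (w, v) ∈ N.A) :
    w = u := by
  have := in_arcs_eq h1 h
  have hm : (w, v) ∈ N.A.filter (fun a => a.2 = v) := Finset.mem_filter.2 ⟨h', rfl⟩
  rw [this, Finset.mem_singleton, Prod.ext_iff] at hm
  exact hm.1

lemma child_unique (h1 : N.outdeg u = 1) (h : (u, v) ∈ N.A) (h' : (u, w) ∈ N.A) :
    w = v := by
  have := out_arcs_eq h1 h
  have hm : (u, w) ∈ N.A.filter (fun a => a.1 = u) := Finset.mem_filter.2 ⟨h', rfl⟩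
  rw [this, Finset.mem_singleton, Prod.ext_iff] at hm
  exact hm.2

lemma exists_in_arc (h1 : 1 ≤ N.indeg v) : ∃ u, (u, v) ∈ N.A := by
  obtain ⟨a, ha⟩ := Finset.card_pos.1 h1
  rw [Finset.mem_filter] at ha
  exact ⟨a.1, by rw [show (a.1, v) = a from Prod.ext rfl ha.2.symm]; exact ha.1⟩

lemma no_out_arc (h1 : N.outdeg u = 0) (h : (u, v) ∈ N.A) : False := by
  have := outdeg_pos h; omega

lemma no_in_arc (h1 : N.indeg v = 0) (h : (u, v) ∈ N.A) : False := by
  have := indeg_pos h; omega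

lemma in_arcs_pair {u' : ℕ} (h1 : N.indeg v = 2) (h : (u, v) ∈ N.A) (h' : (u', v) ∈ N.A)
    (huu : u ≠ u') :
    N.A.filter (fun a => a.2 = v) = {(u, v), (u', v)} :=
  finset_eq_pair h1 (Finset.mem_filter.2 ⟨h, rfl⟩) (Finset.mem_filter.2 ⟨h', rfl⟩)
    (by simp [Prod.ext_iff, huu])

lemma out_arcs_pair {v' : ℕ} (h1 : N.outdeg u = 2) (h : (u, v) ∈ N.A) (h' : (u, v') ∈ N.A)
    (hvv : v ≠ v') :
    N.A.filter (fun a => a.1 = u) = {(u, v), (u, v')} :=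
  finset_eq_pair h1 (Finset.mem_filter.2 ⟨h, rfl⟩) (Finset.mem_filter.2 ⟨h', rfl⟩)
    (by simp [Prod.ext_iff, hvv])

lemma two_le_outdeg {v' : ℕ} (h : (u, v) ∈ N.A) (h' : (u, v') ∈ N.A) (hvv : v ≠ v') :
    2 ≤ N.outdeg u := by
  apply Finset.one_lt_card.2
  exact ⟨(u, v), Finset.mem_filter.2 ⟨h, rfl⟩, (u, v'), Finset.mem_filter.2 ⟨h', rfl⟩,
    by simp [Prod.ext_iff, hvv]⟩

lemma no_self (h : N.isPhylo) (hv : (v, v) ∈ N.A) : False :=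
  h.2.1 v (Relation.TransGen.single hv)

lemma no_two_cycle (h : N.isPhylo) (hv : (u, v) ∈ N.A) (hv' : (v, u) ∈ N.A) : False :=
  h.2.1 u (Relation.TransGen.head hv (Relation.TransGen.single hv'))

end Net

lemma exists_maximal_transGen {s : Finset ℕ} (hs : s.Nonempty) (R : ℕ → ℕ → Prop)
    (hirr : ∀ v, ¬ Relation.TransGen R v v) :
    ∃ a ∈ s, ∀ b ∈ s, ¬ Relation.TransGen R a b := by
  classical
  induction s using Finset.induction with
  | empty => simp at hs
  | @insert x s hx ih =>
    rcases s.eq_empty_or_nonempty with rfl | hne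
    · refine ⟨x, by simp, ?_⟩
      intro b hb
      simp only [Finset.mem_insert, Finset.notMem_empty, or_false] at hb
      subst hb; exact hirr b
    · obtain ⟨a, ha, hmax⟩ := ih hne
      by_cases hax : Relation.TransGen R a x
      · refine ⟨x, Finset.mem_insert_self _ _, ?_⟩
        intro b hb hxb
        rcases Finset.mem_insert.1 hb with rfl | hb
        · exact hirr b hxb
        · exact hmax b hb (hax.trans hxb)
      · refine ⟨a, Finset.mem_insert_of_mem ha, ?_⟩
        intro b hb
        rcases Finset.mem_insert.1 hb with rfl | hb
        · exact hax
        · exact hmax b hb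

end Helpers
namespace Net

variable {N : Net} {u v : ℕ}

lemma exists_out_arc (h1 : 1 ≤ N.outdeg u) : ∃ v, (u, v) ∈ N.A := by
  obtain ⟨a, ha⟩ := Finset.card_pos.1 h1
  rw [Finset.mem_filter] at ha
  exact ⟨a.2, by rw [show (u, a.2) = a from Prod.ext ha.2.symm rfl]; exact ha.1⟩

lemma outdeg_two_children (h2 : N.outdeg u = 2) :
    ∃ x y, x ≠ y ∧ (u, x) ∈ N.A ∧ (u, y) ∈ N.A := by
  obtain ⟨a, b, hab, he⟩ := Finset.card_eq_two.1 h2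
  have ha : a ∈ N.A.filter (fun a => a.1 = u) := by rw [he]; exact Finset.mem_insert_self _ _
  have hb : b ∈ N.A.filter (fun a => a.1 = u) := by
    rw [he]; exact Finset.mem_insert_of_mem (Finset.mem_singleton_self _)
  rw [Finset.mem_filter] at ha hb
  refine ⟨a.2, b.2, ?_, ?_, ?_⟩
  · intro e
    exact hab (Prod.ext_iff.2 ⟨ha.2.trans hb.2.symm, e⟩)
  · rw [show (u, a.2) = a from Prod.ext ha.2.symm rfl]; exact ha.1
  · rw [show (u, b.2) = b from Prod.ext hb.2.symm rfl]; exact hb.1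

lemma other_parent (h2 : N.indeg v = 2) (h : (u, v) ∈ N.A) :
    ∃ w, (w, v) ∈ N.A ∧ w ≠ u := by
  have h1 : 1 < (N.A.filter (fun a => a.2 = v)).card := by
    have : N.indeg v = (N.A.filter (fun a => a.2 = v)).card := rfl
    omega
  obtain ⟨b, hb, hbne⟩ := Finset.exists_mem_ne h1 (u, v)
  rw [Finset.mem_filter] at hb
  refine ⟨b.1, ?_, ?_⟩
  · rw [show (b.1, v) = b from Prod.ext rfl hb.2.symm]; exact hb.1
  · intro e
    exact hbne (Prod.ext_iff.2 ⟨e, hb.2⟩)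

end Net
section Cherry

lemma cherry_main {N N' : Net} {i j : ℕ} (h : N.isPhylo) (hc : N.isCherry i j)
    (hr : CherryReduce N i j N') :
    N'.isPhylo ∧ (N.isTreeChild → N'.isTreeChild) ∧ N'.V.card < N.V.card := by
  obtain ⟨hij, hi, hj, -⟩ := hc
  obtain ⟨p, g, hpi, hpj, hgp, hV, hA⟩ := hr
  obtain ⟨hiV, hii, hio⟩ := hi
  obtain ⟨hjV, hji, hjo⟩ := hj
  have hpV : p ∈ N.V := (h.1 _ hpi).1
  have hgV : g ∈ N.V := (h.1 _ hgp).1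
  have hp2 : 2 ≤ N.outdeg p := Net.two_le_outdeg hpi hpj hij
  have hptree : N.isTreeNode p := by
    rcases h.2.2.2 p hpV with hh | hh | hh | hh
    · exact absurd hh.2.2 (by omega)
    · exact absurd hh.2.2 (by omega)
    · exact hh
    · exact absurd hh.2.2 (by omega)
  obtain ⟨-, hpin, hpout⟩ := hptree
  have hpni : p ≠ i := by rintro rfl; omega
  have hpnj : p ≠ j := by rintro rfl; omega
  have hgnp : g ≠ p := by rintro rfl; exact Net.no_self h hgp
  have hgout : 1 ≤ N.outdeg g := Net.outdeg_pos hgp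
  have hgni : g ≠ i := by rintro rfl; omega
  have hgnj : g ≠ j := by rintro rfl; omega
  have houtp : N.A.filter (fun a => a.1 = p) = {(p, i), (p, j)} :=
    Net.out_arcs_pair hpout hpi hpj hij
  have hinp : N.A.filter (fun a => a.2 = p) = {(g, p)} := Net.in_arcs_eq hpin hgp
  have hgjA : (g, j) ∉ N.A := fun hm => hgnp (Net.parent_unique hji hpj hm)
  have hAmem : ∀ a : ℕ × ℕ, a ∈ N'.A ↔
      ((a ∈ N.A ∧ a ≠ (p, i) ∧ a ≠ (p, j) ∧ a ≠ (g, p)) ∨ a = (g, j)) := by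
    intro a
    rw [hA]
    simp only [Finset.mem_union, Finset.mem_sdiff, Finset.mem_insert, Finset.mem_singleton]
    tauto
  have hV' : ∀ v, v ∈ N'.V ↔ (v ∈ N.V ∧ v ≠ i ∧ v ≠ p) := by
    intro v
    rw [hV]
    simp only [Finset.mem_erase]
    tauto
  -- degree preservation
  have hind : ∀ v, v ≠ i → v ≠ p → N'.indeg v = N.indeg v := by
    intro v hvi hvp
    by_cases hvj : v = j
    · rw [hvj]
      have h1 : N'.A.filter (fun a => a.2 = j) = {(g, j)} := by
        ext a
        simp only [Finset.mem_filter, Finset.mem_singleton]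
        constructor
        · rintro ⟨ha, h2⟩
          rcases (hAmem a).1 ha with ⟨haA, hne1, hne2, hne3⟩ | rfl
          · exfalso
            have haj : a = (a.1, j) := Prod.ext rfl h2
            have hm : (a.1, j) ∈ N.A := haj ▸ haA
            have := Net.parent_unique hji hpj hm
            exact hne2 (by rw [haj, this])
          · rfl
        · rintro rfl
          exact ⟨(hAmem _).2 (Or.inr rfl), rfl⟩
      unfold Net.indeg
      rw [h1, Finset.card_singleton]
      exact hji.symm
    · have h1 : N'.A.filter (fun a => a.2 = v) = N.A.filter (fun a => a.2 = v) := by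
        ext a
        simp only [Finset.mem_filter]
        constructor
        · rintro ⟨ha, h2⟩
          rcases (hAmem a).1 ha with ⟨haA, -⟩ | rfl
          · exact ⟨haA, h2⟩
          · exact absurd h2.symm hvj
        · rintro ⟨ha, h2⟩
          refine ⟨(hAmem a).2 (Or.inl ⟨ha, ?_, ?_, ?_⟩), h2⟩
          · rintro rfl; exact hvi h2.symm
          · rintro rfl; exact hvj h2.symm
          · rintro rfl; exact hvp h2.symm
      unfold Net.indeg
      rw [h1]
  have hout : ∀ v, v ≠ i → v ≠ p → N'.outdeg v = N.outdeg v := by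
    intro v hvi hvp
    by_cases hvg : v = g
    · rw [hvg]
      have h1 : N'.A.filter (fun a => a.1 = g) =
          insert (g, j) ((N.A.filter (fun a => a.1 = g)).erase (g, p)) := by
        ext a
        simp only [Finset.mem_filter, Finset.mem_insert, Finset.mem_erase]
        constructor
        · rintro ⟨ha, h2⟩
          rcases (hAmem a).1 ha with ⟨haA, hne1, hne2, hne3⟩ | rfl
          · exact Or.inr ⟨hne3, haA, h2⟩
          · exact Or.inl rfl
        · rintro (rfl | ⟨hne, haA, h2⟩)
          · exact ⟨(hAmem _).2 (Or.inr rfl), rfl⟩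
          · refine ⟨(hAmem a).2 (Or.inl ⟨haA, ?_, ?_, hne⟩), h2⟩
            · rintro rfl; exact hgnp h2.symm
            · rintro rfl; exact hgnp h2.symm
      unfold Net.outdeg
      rw [h1, Finset.card_insert_of_notMem]
      · have h3 : ((N.A.filter (fun a => a.1 = g)).erase (g, p)).card =
            (N.A.filter (fun a => a.1 = g)).card - 1 :=
          Finset.card_erase_of_mem (Finset.mem_filter.2 ⟨hgp, rfl⟩)
        have h2 : 1 ≤ (N.A.filter (fun a => a.1 = g)).card := Net.outdeg_pos hgp
        omega
      · intro hm
        exact hgjA (Finset.mem_filter.1 (Finset.mem_erase.1 hm).2).1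
    · have h1 : N'.A.filter (fun a => a.1 = v) = N.A.filter (fun a => a.1 = v) := by
        ext a
        simp only [Finset.mem_filter]
        constructor
        · rintro ⟨ha, h2⟩
          rcases (hAmem a).1 ha with ⟨haA, -⟩ | rfl
          · exact ⟨haA, h2⟩
          · exact absurd h2.symm hvg
        · rintro ⟨ha, h2⟩
          refine ⟨(hAmem a).2 (Or.inl ⟨ha, ?_, ?_, ?_⟩), h2⟩
          · rintro rfl; exact hvp h2.symm
          · rintro rfl; exact hvp h2.symm
          · rintro rfl; exact hvg h2.symm
      unfold Net.outdeg
      rw [h1]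
  have hjni : j ≠ i := fun e => hij e.symm
  have hjnp : j ≠ p := fun e => hpnj e.symm
  refine ⟨⟨?_, ?_, ?_, ?_⟩, ?_, ?_⟩
  · -- endpoints
    rintro ⟨a1, a2⟩ ha
    rcases (hAmem _).1 ha with ⟨haA, hne1, hne2, hne3⟩ | he
    · obtain ⟨h1, h2⟩ := h.1 _ haA
      have g1 : a1 ≠ i := by
        intro e
        rw [e] at haA
        exact Net.no_out_arc hio haA
      have g2 : a1 ≠ p := by
        intro e
        rw [e] at haA
        have hm : ((p : ℕ), a2) ∈ N.A.filter (fun a => a.1 = p) :=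
          Finset.mem_filter.2 ⟨haA, rfl⟩
        rw [houtp, Finset.mem_insert, Finset.mem_singleton] at hm
        rcases hm with hcase | hcase
        · have e2 : a2 = i := congrArg Prod.snd hcase
          exact hne1 (Prod.ext_iff.2 ⟨e, e2⟩)
        · have e2 : a2 = j := congrArg Prod.snd hcase
          exact hne2 (Prod.ext_iff.2 ⟨e, e2⟩)
      have g3 : a2 ≠ i := by
        intro e
        rw [e] at haA
        have ha1 : a1 = p := Net.parent_unique hii hpi haA
        exact hne1 (Prod.ext_iff.2 ⟨ha1, e⟩)
      have g4 : a2 ≠ p := by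
        intro e
        rw [e] at haA
        have ha1 : a1 = g := Net.parent_unique hpin hgp haA
        exact hne3 (Prod.ext_iff.2 ⟨ha1, e⟩)
      exact ⟨(hV' _).2 ⟨h1, g1, g2⟩, (hV' _).2 ⟨h2, g3, g4⟩⟩
    · have e1 : a1 = g := congrArg Prod.fst he
      have e2 : a2 = j := congrArg Prod.snd he
      subst e1; subst e2
      exact ⟨(hV' _).2 ⟨hgV, hgni, hgnp⟩, (hV' _).2 ⟨hjV, hjni, hjnp⟩⟩
  · -- acyclicity
    intro v hv
    have harc : ∀ a b : ℕ, (a, b) ∈ N'.A →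
        Relation.TransGen (fun u w => (u, w) ∈ N.A) a b := by
      intro a b hab
      rcases (hAmem _).1 hab with ⟨haA, -⟩ | he
      · exact Relation.TransGen.single haA
      · have e1 : a = g := congrArg Prod.fst he
        have e2 : b = j := congrArg Prod.snd he
        subst e1; subst e2
        exact Relation.TransGen.head hgp (Relation.TransGen.single hpj)
      
    have h2 : Relation.TransGen (Relation.TransGen (fun u w => (u, w) ∈ N.A)) v v :=
      Relation.TransGen.mono harc v v hv
    rw [Relation.transGen_idem] at h2
    exact h.2.1 v h2
  · -- root
    obtain ⟨r, hr, hru⟩ := h.2.2.1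
    obtain ⟨hrV, hr0, hr1⟩ := hr
    have hrni : r ≠ i := by rintro rfl; omega
    have hrnp : r ≠ p := by rintro rfl; omega
    refine ⟨r, ⟨(hV' r).2 ⟨hrV, hrni, hrnp⟩, (hind r hrni hrnp).trans hr0,
      (hout r hrni hrnp).trans hr1⟩, ?_⟩
    rintro v ⟨hvV, hv0, hv1⟩
    obtain ⟨hvN, hvi, hvp⟩ := (hV' v).1 hvV
    exact hru v ⟨hvN, (hind v hvi hvp).symm.trans hv0, (hout v hvi hvp).symm.trans hv1⟩
  · -- classification
    intro v hvV'
    obtain ⟨hvN, hvi, hvp⟩ := (hV' v).1 hvV'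
    have e1 := hind v hvi hvp
    have e2 := hout v hvi hvp
    rcases h.2.2.2 v hvN with ⟨-, d1, d2⟩ | ⟨-, d1, d2⟩ | ⟨-, d1, d2⟩ | ⟨-, d1, d2⟩
    · exact Or.inl ⟨hvV', e1.trans d1, e2.trans d2⟩
    · exact Or.inr (Or.inl ⟨hvV', e1.trans d1, e2.trans d2⟩)
    · exact Or.inr (Or.inr (Or.inl ⟨hvV', e1.trans d1, e2.trans d2⟩))
    · exact Or.inr (Or.inr (Or.inr ⟨hvV', e1.trans d1, e2.trans d2⟩))
  · -- tree-child
    intro htc v hvV' hnl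
    obtain ⟨hvN, hvi, hvp⟩ := (hV' v).1 hvV'
    have e1 := hind v hvi hvp
    have e2 := hout v hvi hvp
    have hnlN : ¬ N.isLeaf v := fun hl => hnl ⟨hvV', e1.trans hl.2.1, e2.trans hl.2.2⟩
    obtain ⟨c, hvc, hcr⟩ := htc v hvN hnlN
    by_cases hvg : v = g
    · rw [hvg]
      refine ⟨j, (hAmem _).2 (Or.inr rfl), ?_⟩
      rintro ⟨-, d1, -⟩
      have := (hind j hjni hjnp).trans hji
      omega
    · have hci : c ≠ i := by rintro rfl; exact hvp (Net.parent_unique hii hpi hvc)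
      have hcp : c ≠ p := by rintro rfl; exact hvg (Net.parent_unique hpin hgp hvc)
      refine ⟨c, (hAmem _).2 (Or.inl ⟨hvc, ?_, ?_, ?_⟩), ?_⟩
      · rintro he; exact hvp (congrArg Prod.fst he)
      · rintro he; exact hvp (congrArg Prod.fst he)
      · rintro he; exact hvg (congrArg Prod.fst he)
      · rintro ⟨hcV', d1, d2⟩
        obtain ⟨hcN, -, -⟩ := (hV' c).1 hcV'
        exact hcr ⟨hcN, (hind c hci hcp).symm.trans d1, (hout c hci hcp).symm.trans d2⟩
  · -- card
    rw [hV]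
    calc ((N.V.erase i).erase p).card ≤ (N.V.erase i).card :=
          Finset.card_le_card (Finset.erase_subset _ _)
      _ < N.V.card := Finset.card_erase_lt_of_mem hiV

end Cherry
section Ret

lemma ret_main {N N' : Net} {i j : ℕ} (h : N.isPhylo) (hc : N.isRetCherry i j)
    (hr : RetCherryReduce N i j N') :
    N'.isPhylo ∧ (N.isTreeChild → N'.isTreeChild) ∧ N'.V.card < N.V.card := by
  obtain ⟨hij, ⟨hiV, hii, hio⟩, ⟨hjV, hji, hjo⟩, pi', pj', hpi'i, hpj'j, hretic', htree', -⟩ := hc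
  obtain ⟨pi, pj, q, g, hpii, hpjj, hpjpi, hqpi, hqnpj, hgpj, hV, hA⟩ := hr
  have epi : pi = pi' := Net.parent_unique hii hpi'i hpii
  have epj : pj = pj' := Net.parent_unique hji hpj'j hpjj
  subst epi; subst epj
  obtain ⟨hpiV, hpi2, hpi1⟩ := hretic'
  obtain ⟨hpjV, hpj1, hpj2⟩ := htree'
  have hqV : q ∈ N.V := (h.1 _ hqpi).1
  have hgV : g ∈ N.V := (h.1 _ hgpj).1
  -- distinctness
  have hpinpj : pi ≠ pj := by rintro rfl; omega
  have hpjnpi : pj ≠ pi := fun e => hpinpj e.symm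
  have hpini : pi ≠ i := by rintro rfl; omega
  have hpinj : pi ≠ j := by rintro rfl; omega
  have hpjni : pj ≠ i := by rintro rfl; omega
  have hpjnj : pj ≠ j := by rintro rfl; omega
  have hqout : 1 ≤ N.outdeg q := Net.outdeg_pos hqpi
  have hgout : 1 ≤ N.outdeg g := Net.outdeg_pos hgpj
  have hqnpi : q ≠ pi := by rintro rfl; exact Net.no_self h hqpi
  have hqni : q ≠ i := by rintro rfl; omega
  have hqnj : q ≠ j := by rintro rfl; omega
  have hgnpj : g ≠ pj := by rintro rfl; exact Net.no_self h hgpj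
  have hgnpi : g ≠ pi := by
    rintro rfl
    exact hpjni (Net.child_unique hpi1 hpii hgpj)
  have hgni : g ≠ i := by rintro rfl; omega
  have hgnj : g ≠ j := by rintro rfl; omega
  have hjnpi : j ≠ pi := fun e => hpinj e.symm
  have hjnpj : j ≠ pj := fun e => hpjnj e.symm
  have hinpi : i ≠ pi := fun e => hpini e.symm
  have hinpj : i ≠ pj := fun e => hpjni e.symm
  have hpjnq : pj ≠ q := fun e => hqnpj e.symm
  -- arc inventories
  have houtpi : N.A.filter (fun a => a.1 = pi) = {(pi, i)} := Net.out_arcs_eq hpi1 hpii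
  have hinpi' : N.A.filter (fun a => a.2 = pi) = {(pj, pi), (q, pi)} :=
    Net.in_arcs_pair hpi2 hpjpi hqpi hpjnq
  have houtpj : N.A.filter (fun a => a.1 = pj) = {(pj, j), (pj, pi)} :=
    Net.out_arcs_pair hpj2 hpjj hpjpi hjnpi
  have hinpj' : N.A.filter (fun a => a.2 = pj) = {(g, pj)} := Net.in_arcs_eq hpj1 hgpj
  have hqiA : (q, i) ∉ N.A := fun hm => hqnpi (Net.parent_unique hii hpii hm)
  have hgjA : (g, j) ∉ N.A := fun hm => hgnpj (Net.parent_unique hji hpjj hm)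
  have hqjA : (q, j) ∉ N.A := fun hm => hqnpj (Net.parent_unique hji hpjj hm)
  have hAmem : ∀ a : ℕ × ℕ, a ∈ N'.A ↔
      ((a ∈ N.A ∧ a ≠ (pj, pi) ∧ a ≠ (q, pi) ∧ a ≠ (pi, i) ∧ a ≠ (g, pj) ∧ a ≠ (pj, j)) ∨
        a = (q, i) ∨ a = (g, j)) := by
    intro a
    rw [hA]
    simp only [Finset.mem_union, Finset.mem_sdiff, Finset.mem_insert, Finset.mem_singleton]
    tauto
  have hV' : ∀ v, v ∈ N'.V ↔ (v ∈ N.V ∧ v ≠ pi ∧ v ≠ pj) := by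
    intro v
    rw [hV]
    simp only [Finset.mem_erase]
    tauto
  -- indegree preservation
  have hind : ∀ v, v ≠ pi → v ≠ pj → N'.indeg v = N.indeg v := by
    intro v hvpi hvpj
    by_cases hvi : v = i
    · rw [hvi]
      have h1 : N'.A.filter (fun a => a.2 = i) = {(q, i)} := by
        ext a
        simp only [Finset.mem_filter, Finset.mem_singleton]
        constructor
        · rintro ⟨ha, h2⟩
          rcases (hAmem a).1 ha with ⟨haA, -, -, hne3, -, -⟩ | rfl | rfl
          · exfalso
            have haj : a = (a.1, i) := Prod.ext rfl h2
            have hm : (a.1, i) ∈ N.A := haj ▸ haA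
            have := Net.parent_unique hii hpii hm
            exact hne3 (by rw [haj, this])
          · rfl
          · exact absurd h2.symm hij
        · rintro rfl
          exact ⟨(hAmem _).2 (Or.inr (Or.inl rfl)), rfl⟩
      unfold Net.indeg
      rw [h1, Finset.card_singleton]
      exact hii.symm
    by_cases hvj : v = j
    · rw [hvj]
      have h1 : N'.A.filter (fun a => a.2 = j) = {(g, j)} := by
        ext a
        simp only [Finset.mem_filter, Finset.mem_singleton]
        constructor
        · rintro ⟨ha, h2⟩
          rcases (hAmem a).1 ha with ⟨haA, -, -, -, -, hne5⟩ | rfl | rfl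
          · exfalso
            have haj : a = (a.1, j) := Prod.ext rfl h2
            have hm : (a.1, j) ∈ N.A := haj ▸ haA
            have := Net.parent_unique hji hpjj hm
            exact hne5 (by rw [haj, this])
          · exact absurd h2 hij
          · rfl
        · rintro rfl
          exact ⟨(hAmem _).2 (Or.inr (Or.inr rfl)), rfl⟩
      unfold Net.indeg
      rw [h1, Finset.card_singleton]
      exact hji.symm
    · have h1 : N'.A.filter (fun a => a.2 = v) = N.A.filter (fun a => a.2 = v) := by
        ext a
        simp only [Finset.mem_filter]
        constructor
        · rintro ⟨ha, h2⟩
          rcases (hAmem a).1 ha with ⟨haA, -⟩ | rfl | rfl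
          · exact ⟨haA, h2⟩
          · exact absurd h2.symm hvi
          · exact absurd h2.symm hvj
        · rintro ⟨ha, h2⟩
          refine ⟨(hAmem a).2 (Or.inl ⟨ha, ?_, ?_, ?_, ?_, ?_⟩), h2⟩
          · rintro rfl; exact hvpi h2.symm
          · rintro rfl; exact hvpi h2.symm
          · rintro rfl; exact hvi h2.symm
          · rintro rfl; exact hvpj h2.symm
          · rintro rfl; exact hvj h2.symm
      unfold Net.indeg
      rw [h1]
  -- outdegree preservation
  have hout : ∀ v, v ≠ pi → v ≠ pj → N'.outdeg v = N.outdeg v := by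
    intro v hvpi hvpj
    by_cases hvq : v = q
    · rw [hvq]
      by_cases hqg : q = g
      · -- q = g : loses (q,pi),(q,pj), gains (q,i),(q,j)
        have h1 : N'.A.filter (fun a => a.1 = q) =
            insert (q, i) (insert (q, j)
              (((N.A.filter (fun a => a.1 = q)).erase (q, pi)).erase (q, pj))) := by
          ext a
          simp only [Finset.mem_filter, Finset.mem_insert, Finset.mem_erase]
          constructor
          · rintro ⟨ha, h2⟩
            rcases (hAmem a).1 ha with ⟨haA, hne1, hne2, hne3, hne4, hne5⟩ | rfl | rfl
            · refine Or.inr (Or.inr ⟨?_, ?_, haA, h2⟩)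
              · rintro rfl; exact hne4 (by rw [hqg])
              · exact hne2
            · exact Or.inl rfl
            · exact Or.inr (Or.inl (by rw [hqg]))
          · rintro (rfl | rfl | ⟨hne1, hne2, haA, h2⟩)
            · exact ⟨(hAmem _).2 (Or.inr (Or.inl rfl)), rfl⟩
            · exact ⟨(hAmem _).2 (Or.inr (Or.inr (by rw [hqg]))), rfl⟩
            · refine ⟨(hAmem a).2 (Or.inl ⟨haA, ?_, hne2, ?_, ?_, ?_⟩), h2⟩
              · rintro rfl; exact hpjnq h2
              · rintro rfl; exact hqnpi h2.symm
              · rintro rfl; exact hne1 (by rw [hqg])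
              · rintro rfl; exact hpjnq h2
        unfold Net.outdeg
        rw [h1]
        have hm1 : ((q : ℕ), pi) ∈ N.A.filter (fun a => a.1 = q) :=
          Finset.mem_filter.2 ⟨hqpi, rfl⟩
        have hm2 : ((q : ℕ), pj) ∈ (N.A.filter (fun a => a.1 = q)).erase (q, pi) := by
          refine Finset.mem_erase.2 ⟨?_, Finset.mem_filter.2 ⟨by rw [hqg]; exact hgpj, rfl⟩⟩
          simp [Prod.ext_iff, hpjnpi]
        have hc2 : 2 ≤ (N.A.filter (fun a => a.1 = q)).card := by
          apply Finset.one_lt_card.2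
          exact ⟨(q, pi), hm1, (q, pj), (Finset.mem_erase.1 hm2).2, by
            simp [Prod.ext_iff]; exact fun e => hpinpj e⟩
        rw [Finset.card_insert_of_notMem, Finset.card_insert_of_notMem]
        · have e1 : (((N.A.filter (fun a => a.1 = q)).erase (q, pi)).erase (q, pj)).card =
              ((N.A.filter (fun a => a.1 = q)).erase (q, pi)).card - 1 :=
            Finset.card_erase_of_mem hm2
          have e2 : ((N.A.filter (fun a => a.1 = q)).erase (q, pi)).card =
              (N.A.filter (fun a => a.1 = q)).card - 1 :=
            Finset.card_erase_of_mem hm1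
          omega
        · intro hm
          exact hqjA (Finset.mem_filter.1 (Finset.mem_erase.1 (Finset.mem_erase.1 hm).2).2).1
        · intro hm
          rcases Finset.mem_insert.1 hm with e | hm
          · exact hij (congrArg Prod.snd e)
          · exact hqiA (Finset.mem_filter.1 (Finset.mem_erase.1 (Finset.mem_erase.1 hm).2).2).1
      · -- q ≠ g
        have h1 : N'.A.filter (fun a => a.1 = q) =
            insert (q, i) ((N.A.filter (fun a => a.1 = q)).erase (q, pi)) := by
          ext a
          simp only [Finset.mem_filter, Finset.mem_insert, Finset.mem_erase]
          constructor
          · rintro ⟨ha, h2⟩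
            rcases (hAmem a).1 ha with ⟨haA, hne1, hne2, hne3, hne4, hne5⟩ | rfl | rfl
            · exact Or.inr ⟨hne2, haA, h2⟩
            · exact Or.inl rfl
            · exact absurd h2.symm hqg
          · rintro (rfl | ⟨hne, haA, h2⟩)
            · exact ⟨(hAmem _).2 (Or.inr (Or.inl rfl)), rfl⟩
            · refine ⟨(hAmem a).2 (Or.inl ⟨haA, ?_, hne, ?_, ?_, ?_⟩), h2⟩
              · rintro rfl; exact hpjnq h2
              · rintro rfl; exact hqnpi h2.symm
              · rintro rfl; exact hqg h2.symm
              · rintro rfl; exact hpjnq h2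
        unfold Net.outdeg
        rw [h1, Finset.card_insert_of_notMem]
        · have e2 : ((N.A.filter (fun a => a.1 = q)).erase (q, pi)).card =
              (N.A.filter (fun a => a.1 = q)).card - 1 :=
            Finset.card_erase_of_mem (Finset.mem_filter.2 ⟨hqpi, rfl⟩)
          have e3 : 1 ≤ (N.A.filter (fun a => a.1 = q)).card := Net.outdeg_pos hqpi
          omega
        · intro hm
          exact hqiA (Finset.mem_filter.1 (Finset.mem_erase.1 hm).2).1
    by_cases hvg : v = g
    · rw [hvg]
      have hgq : g ≠ q := fun e => hvq (hvg.trans e)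
      have h1 : N'.A.filter (fun a => a.1 = g) =
          insert (g, j) ((N.A.filter (fun a => a.1 = g)).erase (g, pj)) := by
        ext a
        simp only [Finset.mem_filter, Finset.mem_insert, Finset.mem_erase]
        constructor
        · rintro ⟨ha, h2⟩
          rcases (hAmem a).1 ha with ⟨haA, hne1, hne2, hne3, hne4, hne5⟩ | rfl | rfl
          · exact Or.inr ⟨hne4, haA, h2⟩
          · exact absurd h2.symm hgq
          · exact Or.inl rfl
        · rintro (rfl | ⟨hne, haA, h2⟩)
          · exact ⟨(hAmem _).2 (Or.inr (Or.inr rfl)), rfl⟩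
          · refine ⟨(hAmem a).2 (Or.inl ⟨haA, ?_, ?_, ?_, hne, ?_⟩), h2⟩
            · rintro rfl; exact hgnpj h2.symm
            · rintro rfl; exact hgq h2.symm
            · rintro rfl; exact hgnpi h2.symm
            · rintro rfl; exact hgnpj h2.symm
      unfold Net.outdeg
      rw [h1, Finset.card_insert_of_notMem]
      · have e2 : ((N.A.filter (fun a => a.1 = g)).erase (g, pj)).card =
            (N.A.filter (fun a => a.1 = g)).card - 1 :=
          Finset.card_erase_of_mem (Finset.mem_filter.2 ⟨hgpj, rfl⟩)
        have e3 : 1 ≤ (N.A.filter (fun a => a.1 = g)).card := Net.outdeg_pos hgpj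
        omega
      · intro hm
        exact hgjA (Finset.mem_filter.1 (Finset.mem_erase.1 hm).2).1
    · have h1 : N'.A.filter (fun a => a.1 = v) = N.A.filter (fun a => a.1 = v) := by
        ext a
        simp only [Finset.mem_filter]
        constructor
        · rintro ⟨ha, h2⟩
          rcases (hAmem a).1 ha with ⟨haA, -⟩ | rfl | rfl
          · exact ⟨haA, h2⟩
          · exact absurd h2.symm hvq
          · exact absurd h2.symm hvg
        · rintro ⟨ha, h2⟩
          refine ⟨(hAmem a).2 (Or.inl ⟨ha, ?_, ?_, ?_, ?_, ?_⟩), h2⟩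
          · rintro rfl; exact hvpj h2.symm
          · rintro rfl; exact hvq h2.symm
          · rintro rfl; exact hvpi h2.symm
          · rintro rfl; exact hvg h2.symm
          · rintro rfl; exact hvpj h2.symm
      unfold Net.outdeg
      rw [h1]
  refine ⟨⟨?_, ?_, ?_, ?_⟩, ?_, ?_⟩
  · -- endpoints
    rintro ⟨a1, a2⟩ ha
    rcases (hAmem _).1 ha with ⟨haA, hne1, hne2, hne3, hne4, hne5⟩ | he | he
    · obtain ⟨h1, h2⟩ := h.1 _ haA
      have g1 : a1 ≠ pi := by
        intro e
        rw [e] at haA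
        have e2 : a2 = i := Net.child_unique hpi1 hpii haA
        exact hne3 (Prod.ext_iff.2 ⟨e, e2⟩)
      have g2 : a1 ≠ pj := by
        intro e
        rw [e] at haA
        have hm : ((pj : ℕ), a2) ∈ N.A.filter (fun a => a.1 = pj) :=
          Finset.mem_filter.2 ⟨haA, rfl⟩
        rw [houtpj, Finset.mem_insert, Finset.mem_singleton] at hm
        rcases hm with hcase | hcase
        · have e2 : a2 = j := congrArg Prod.snd hcase
          exact hne5 (Prod.ext_iff.2 ⟨e, e2⟩)
        · have e2 : a2 = pi := congrArg Prod.snd hcase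
          exact hne1 (Prod.ext_iff.2 ⟨e, e2⟩)
      have g3 : a2 ≠ pi := by
        intro e
        rw [e] at haA
        have hm : (a1, (pi : ℕ)) ∈ N.A.filter (fun a => a.2 = pi) :=
          Finset.mem_filter.2 ⟨haA, rfl⟩
        rw [hinpi', Finset.mem_insert, Finset.mem_singleton] at hm
        rcases hm with hcase | hcase
        · have e2 : a1 = pj := congrArg Prod.fst hcase
          exact hne1 (Prod.ext_iff.2 ⟨e2, e⟩)
        · have e2 : a1 = q := congrArg Prod.fst hcase
          exact hne2 (Prod.ext_iff.2 ⟨e2, e⟩)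
      have g4 : a2 ≠ pj := by
        intro e
        rw [e] at haA
        have e2 : a1 = g := Net.parent_unique hpj1 hgpj haA
        exact hne4 (Prod.ext_iff.2 ⟨e2, e⟩)
      exact ⟨(hV' _).2 ⟨h1, g1, g2⟩, (hV' _).2 ⟨h2, g3, g4⟩⟩
    · have e1 : a1 = q := congrArg Prod.fst he
      have e2 : a2 = i := congrArg Prod.snd he
      subst e1; subst e2
      exact ⟨(hV' _).2 ⟨hqV, hqnpi, hqnpj⟩, (hV' _).2 ⟨hiV, hinpi, hinpj⟩⟩
    · have e1 : a1 = g := congrArg Prod.fst he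
      have e2 : a2 = j := congrArg Prod.snd he
      subst e1; subst e2
      exact ⟨(hV' _).2 ⟨hgV, hgnpi, hgnpj⟩, (hV' _).2 ⟨hjV, hjnpi, hjnpj⟩⟩
  · -- acyclicity
    intro v hv
    have harc : ∀ a b : ℕ, (a, b) ∈ N'.A →
        Relation.TransGen (fun u w => (u, w) ∈ N.A) a b := by
      intro a b hab
      rcases (hAmem _).1 hab with ⟨haA, -⟩ | he | he
      · exact Relation.TransGen.single haA
      · have e1 : a = q := congrArg Prod.fst he
        have e2 : b = i := congrArg Prod.snd he
        subst e1; subst e2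
        exact Relation.TransGen.head hqpi (Relation.TransGen.single hpii)
      · have e1 : a = g := congrArg Prod.fst he
        have e2 : b = j := congrArg Prod.snd he
        subst e1; subst e2
        exact Relation.TransGen.head hgpj (Relation.TransGen.single hpjj)
    have h2 : Relation.TransGen (Relation.TransGen (fun u w => (u, w) ∈ N.A)) v v :=
      Relation.TransGen.mono harc v v hv
    rw [Relation.transGen_idem] at h2
    exact h.2.1 v h2
  · -- root
    obtain ⟨r, hrr, hru⟩ := h.2.2.1
    obtain ⟨hrV, hr0, hr1⟩ := hrr
    have hrnpi : r ≠ pi := by rintro rfl; omega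
    have hrnpj : r ≠ pj := by rintro rfl; omega
    refine ⟨r, ⟨(hV' r).2 ⟨hrV, hrnpi, hrnpj⟩, (hind r hrnpi hrnpj).trans hr0,
      (hout r hrnpi hrnpj).trans hr1⟩, ?_⟩
    rintro v ⟨hvV, hv0, hv1⟩
    obtain ⟨hvN, hvpi, hvpj⟩ := (hV' v).1 hvV
    exact hru v ⟨hvN, (hind v hvpi hvpj).symm.trans hv0, (hout v hvpi hvpj).symm.trans hv1⟩
  · -- classification
    intro v hvV'
    obtain ⟨hvN, hvpi, hvpj⟩ := (hV' v).1 hvV'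
    have e1 := hind v hvpi hvpj
    have e2 := hout v hvpi hvpj
    rcases h.2.2.2 v hvN with ⟨-, d1, d2⟩ | ⟨-, d1, d2⟩ | ⟨-, d1, d2⟩ | ⟨-, d1, d2⟩
    · exact Or.inl ⟨hvV', e1.trans d1, e2.trans d2⟩
    · exact Or.inr (Or.inl ⟨hvV', e1.trans d1, e2.trans d2⟩)
    · exact Or.inr (Or.inr (Or.inl ⟨hvV', e1.trans d1, e2.trans d2⟩))
    · exact Or.inr (Or.inr (Or.inr ⟨hvV', e1.trans d1, e2.trans d2⟩))
  · -- tree-child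
    intro htc v hvV' hnl
    obtain ⟨hvN, hvpi, hvpj⟩ := (hV' v).1 hvV'
    have e1 := hind v hvpi hvpj
    have e2 := hout v hvpi hvpj
    have hnlN : ¬ N.isLeaf v := fun hl => hnl ⟨hvV', e1.trans hl.2.1, e2.trans hl.2.2⟩
    obtain ⟨c, hvc, hcr⟩ := htc v hvN hnlN
    by_cases hvq : v = q
    · rw [hvq]
      refine ⟨i, (hAmem _).2 (Or.inr (Or.inl rfl)), ?_⟩
      rintro ⟨-, d1, -⟩
      have := (hind i hinpi hinpj).trans hii
      omega
    by_cases hvg : v = g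
    · rw [hvg]
      refine ⟨j, (hAmem _).2 (Or.inr (Or.inr rfl)), ?_⟩
      rintro ⟨-, d1, -⟩
      have := (hind j hjnpi hjnpj).trans hji
      omega
    · have hcpi : c ≠ pi := by
        rintro rfl
        have hm : (v, c) ∈ N.A.filter (fun a => a.2 = c) := Finset.mem_filter.2 ⟨hvc, rfl⟩
        rw [hinpi', Finset.mem_insert, Finset.mem_singleton] at hm
        rcases hm with hcase | hcase
        · exact hvpj (congrArg Prod.fst hcase)
        · exact hvq (congrArg Prod.fst hcase)
      have hcpj : c ≠ pj := by
        rintro rfl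
        exact hvg (Net.parent_unique hpj1 hgpj hvc)
      refine ⟨c, (hAmem _).2 (Or.inl ⟨hvc, ?_, ?_, ?_, ?_, ?_⟩), ?_⟩
      · rintro he; exact hvpj (congrArg Prod.fst he)
      · rintro he; exact hvq (congrArg Prod.fst he)
      · rintro he; exact hvpi (congrArg Prod.fst he)
      · rintro he; exact hvg (congrArg Prod.fst he)
      · rintro he; exact hvpj (congrArg Prod.fst he)
      · rintro ⟨hcV', d1, d2⟩
        obtain ⟨hcN, -, -⟩ := (hV' c).1 hcV'
        exact hcr ⟨hcN, (hind c hcpi hcpj).symm.trans d1, (hout c hcpi hcpj).symm.trans d2⟩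
  · -- card
    rw [hV]
    calc ((N.V.erase pi).erase pj).card ≤ (N.V.erase pi).card :=
          Finset.card_le_card (Finset.erase_subset _ _)
      _ < N.V.card := Finset.card_erase_lt_of_mem hpiV

end Ret
section Exist

lemma trivial_or_reducible {N : Net} (h : N.isPhylo) (htc : N.isTreeChild) :
    (∃ l, isTrivial N l) ∨
      ∃ s N', Reduces N s N' ∧ N'.isPhylo ∧ N'.isTreeChild ∧ N'.V.card < N.V.card := by
  classical
  obtain ⟨r, hroot, hru⟩ := h.2.2.1
  obtain ⟨hrV, hr0, hr1⟩ := hroot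
  obtain ⟨c, hrc⟩ := Net.exists_out_arc (by omega : 1 ≤ N.outdeg r)
  have hreach : ∀ v ∈ N.V, v = r ∨ Relation.TransGen (fun u w => (u, w) ∈ N.A) r v := by
    by_contra hcon
    push_neg at hcon
    obtain ⟨v0, hv0V, hv0r, hv0n⟩ := hcon
    set B := N.V.filter
      (fun v => v ≠ r ∧ ¬ Relation.TransGen (fun u w => (u, w) ∈ N.A) r v) with hB
    have hBne : B.Nonempty := ⟨v0, Finset.mem_filter.2 ⟨hv0V, hv0r, hv0n⟩⟩
    obtain ⟨m, hmB, hmax⟩ := exists_maximal_transGen hBne (fun u w => (w, u) ∈ N.A)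
      (fun v hv => h.2.1 v (Relation.transGen_swap.1 hv))
    have hmV := (Finset.mem_filter.1 hmB).1
    obtain ⟨hmr, hmn⟩ := (Finset.mem_filter.1 hmB).2
    have hm1 : 1 ≤ N.indeg m := by
      rcases h.2.2.2 m hmV with hh | hh | hh | hh
      · exact absurd (hru m hh) hmr
      · obtain ⟨-, d1, -⟩ := hh; omega
      · obtain ⟨-, d1, -⟩ := hh; omega
      · obtain ⟨-, d1, -⟩ := hh; omega
    obtain ⟨u, hum⟩ := Net.exists_in_arc hm1
    have huV : u ∈ N.V := (h.1 _ hum).1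
    have huB : u ∉ B := fun hu => hmax u hu (Relation.TransGen.single hum)
    have hur : u = r ∨ Relation.TransGen (fun u w => (u, w) ∈ N.A) r u := by
      by_contra hc2
      push_neg at hc2
      exact huB (Finset.mem_filter.2 ⟨huV, hc2.1, hc2.2⟩)
    rcases hur with he | htg
    · exact hmn (Relation.TransGen.single (he ▸ hum))
    · exact hmn (htg.tail hum)
  by_cases hcleaf : N.isLeaf c
  · left
    obtain ⟨hcV, hci, hco⟩ := hcleaf
    have hrc' : r ≠ c := by rintro rfl; omega
    have htgc : ∀ v, Relation.TransGen (fun u w => (u, w) ∈ N.A) r v → v = c := by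
      intro v htg
      obtain ⟨x, hstep, hrt⟩ := Relation.TransGen.head'_iff.1 htg
      have hx : x = c := Net.child_unique hr1 hrc hstep
      rw [hx] at hrt
      rcases Relation.ReflTransGen.cases_head hrt with he | ⟨w, hstep2, -⟩
      · exact he.symm
      · exact (Net.no_out_arc hco hstep2).elim
    refine ⟨c, r, hrc', ?_, ?_⟩
    · apply Finset.ext
      intro v
      simp only [Finset.mem_insert, Finset.mem_singleton]
      constructor
      · intro hv
        rcases hreach v hv with he | htg
        · exact Or.inl he
        · exact Or.inr (htgc v htg)
      · rintro (rfl | rfl)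
        · exact hrV
        · exact (h.1 _ hrc).2
    · apply Finset.ext
      rintro ⟨a1, a2⟩
      simp only [Finset.mem_singleton]
      constructor
      · intro ha
        have h1 := (h.1 _ ha).1
        rcases hreach a1 h1 with he | htg
        · rw [he] at ha
          exact Prod.ext_iff.2 ⟨he, Net.child_unique hr1 hrc ha⟩
        · have he : a1 = c := htgc a1 htg
          rw [he] at ha
          exact (Net.no_out_arc hco ha).elim
      · intro ha
        have e1 : a1 = r := congrArg Prod.fst ha
        have e2 : a2 = c := congrArg Prod.snd ha
        rw [e1, e2]
        exact hrc
  · right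
    have hcV : c ∈ N.V := (h.1 _ hrc).2
    have hcnr : c ≠ r := by rintro rfl; exact Net.no_self h hrc
    have hcnotretic : ¬ N.isRetic c := by
      have hrnl : ¬ N.isLeaf r := fun hl => by obtain ⟨-, -, d⟩ := hl; omega
      obtain ⟨c0, hrc0, hc0⟩ := htc r hrV hrnl
      have he : c0 = c := Net.child_unique hr1 hrc hrc0
      rwa [he] at hc0
    have hctree : N.isTreeNode c := by
      rcases h.2.2.2 c hcV with hh | hh | hh | hh
      · exact absurd (hru c hh) hcnr
      · exact absurd hh hcleaf
      · exact hh
      · exact absurd hh hcnotretic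
    set T := N.V.filter (fun v => N.indeg v = 1 ∧ N.outdeg v = 2) with hT
    have hTne : T.Nonempty := ⟨c, Finset.mem_filter.2 ⟨hcV, hctree.2.1, hctree.2.2⟩⟩
    obtain ⟨u, huT, humax⟩ := exists_maximal_transGen hTne (fun u w => (u, w) ∈ N.A) h.2.1
    have huV := (Finset.mem_filter.1 huT).1
    obtain ⟨hu1, hu2⟩ := (Finset.mem_filter.1 huT).2
    obtain ⟨x, y, hxy, hux, huy⟩ := Net.outdeg_two_children hu2
    have hnotree : ∀ z, Relation.TransGen (fun u w => (u, w) ∈ N.A) u z →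
        ¬ N.isTreeNode z := by
      intro z htg hz
      exact humax z (Finset.mem_filter.2 ⟨hz.1, hz.2.1, hz.2.2⟩) htg
    have hclass : ∀ z, (u, z) ∈ N.A → N.isLeaf z ∨ N.isRetic z := by
      intro z hz
      have hzV : z ∈ N.V := (h.1 _ hz).2
      rcases h.2.2.2 z hzV with hh | hh | hh | hh
      · exact (Net.no_in_arc hh.2.1 hz).elim
      · exact Or.inl hh
      · exact (hnotree z (Relation.TransGen.single hz) hh).elim
      · exact Or.inr hh
    have hunl : ¬ N.isLeaf u := fun hl => by obtain ⟨-, -, d⟩ := hl; omega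
    obtain ⟨c0, huc0, hc0r⟩ := htc u huV hunl
    have hc0xy : c0 = x ∨ c0 = y := by
      have hm : (u, c0) ∈ N.A.filter (fun a => a.1 = u) := Finset.mem_filter.2 ⟨huc0, rfl⟩
      rw [Net.out_arcs_pair hu2 hux huy hxy, Finset.mem_insert, Finset.mem_singleton] at hm
      rcases hm with e | e
      · exact Or.inl (congrArg Prod.snd e)
      · exact Or.inr (congrArg Prod.snd e)
    obtain ⟨g, hgu⟩ := Net.exists_in_arc (by omega : 1 ≤ N.indeg u)
    have key : ∃ lx z, lx ≠ z ∧ (u, lx) ∈ N.A ∧ (u, z) ∈ N.A ∧ N.isLeaf lx ∧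
        (N.isLeaf z ∨ N.isRetic z) := by
      rcases hc0xy with rfl | rfl
      · rcases hclass c0 hux with hxl | hxr
        · exact ⟨c0, y, hxy, hux, huy, hxl, hclass y huy⟩
        · exact absurd hxr hc0r
      · rcases hclass c0 huy with hyl | hyr
        · exact ⟨c0, x, fun e => hxy e.symm, huy, hux, hyl, hclass x hux⟩
        · exact absurd hyr hc0r
    obtain ⟨lx, z, hlz, hulx, huz, hlleaf, hzc⟩ := key
    rcases hzc with hzleaf | hzretic
    · -- cherry (z, lx)
      have hcher : N.isCherry z lx := ⟨fun e => hlz e.symm, hzleaf, hlleaf, u, huz, hulx⟩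
      have hcr : CherryReduce N z lx
          ⟨(N.V.erase z).erase u, (N.A \ {(u, z), (u, lx), (g, u)}) ∪ {(g, lx)}⟩ :=
        ⟨u, g, huz, hulx, hgu, rfl, rfl⟩
      have hm := cherry_main h hcher hcr
      exact ⟨(z, lx), _, Or.inl ⟨hcher, hcr⟩, hm.1, hm.2.1 htc, hm.2.2⟩
    · -- reticulated cherry (d, lx)
      obtain ⟨hzV, hz2, hz1⟩ := hzretic
      have hznl : ¬ N.isLeaf z := fun hl => by obtain ⟨-, -, d⟩ := hl; omega
      obtain ⟨d, hzd, hdr⟩ := htc z hzV hznl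
      have hdV : d ∈ N.V := (h.1 _ hzd).2
      have hdleaf : N.isLeaf d := by
        rcases h.2.2.2 d hdV with hh | hh | hh | hh
        · exact (Net.no_in_arc hh.2.1 hzd).elim
        · exact hh
        · exact (hnotree d (Relation.TransGen.head huz (Relation.TransGen.single hzd)) hh).elim
        · exact absurd hh hdr
      have hdnlx : d ≠ lx := by
        rintro rfl
        have he : z = u := Net.parent_unique hdleaf.2.1 hulx hzd
        exact Net.no_self h (he ▸ huz)
      obtain ⟨q, hqz, hqnu⟩ := Net.other_parent hz2 huz
      have hrch : N.isRetCherry d lx :=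
        ⟨hdnlx, hdleaf, hlleaf, z, u, hzd, hulx, ⟨hzV, hz2, hz1⟩, ⟨huV, hu1, hu2⟩, huz⟩
      have hrr : RetCherryReduce N d lx
          ⟨(N.V.erase z).erase u,
            (N.A \ {(u, z), (q, z), (z, d), (g, u), (u, lx)}) ∪ {(q, d), (g, lx)}⟩ :=
        ⟨z, u, q, g, hzd, hulx, huz, hqz, hqnu, hgu, rfl, rfl⟩
      have hm := ret_main h hrch hrr
      exact ⟨(d, lx), _, Or.inr ⟨hrch, hrr⟩, hm.1, hm.2.1 htc, hm.2.2⟩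

lemma orchard_aux : ∀ (n : ℕ) (N : Net), N.V.card ≤ n → N.isPhylo → N.isTreeChild →
    ∃ S, CompleteRS N S := by
  intro n
  induction n with
  | zero =>
    intro N hcard h htc
    obtain ⟨r, hroot, -⟩ := h.2.2.1
    have : 0 < N.V.card := Finset.card_pos.2 ⟨r, hroot.1⟩
    omega
  | succ n ih =>
    intro N hcard h htc
    rcases trivial_or_reducible h htc with ⟨l, htriv⟩ | ⟨s, N', hred, hp, htc', hlt⟩
    · exact ⟨[], N, l, ReducesSeq.nil N, htriv⟩
    · obtain ⟨S, hS⟩ := ih N' (by omega) hp htc'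
      obtain ⟨N'', l, hseq, htriv⟩ := hS
      exact ⟨s :: S, N'', l, ReducesSeq.cons hred hseq, htriv⟩

end Exist
/-- Every tree-child network is orchard, and reductions of tree-child networks
are tree-child. -/
theorem treeChild_isOrchard_and_reduce (N : Net)
    (h : N.isPhylo) (htc : N.isTreeChild) :
    N.isOrchard ∧ ∀ (s : ℕ × ℕ) (N' : Net), Reduces N s N' → N'.isTreeChild := by
  constructor
  · exact ⟨h, orchard_aux N.V.card N le_rfl h htc⟩
  · rintro ⟨i, j⟩ N' (⟨hc, hred⟩ | ⟨hc, hred⟩)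
    · exact (cherry_main h hc hred).2.1 htc
    · exact (ret_main h hc hred).2.1 htc
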